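/- Let n ≥ 1 and let Y_n be a minimizer of the quantization energy among subsets of Q with n points. Then every generator y ∈ Y_n lies in the topological interior (in ℝ³) of its Voronoi cell V_y; in particular, y does not lie on the boundary of V_y. -/

import Mathlib

open MeasureTheory

noncomputable section

/-- Euclidean 3-space. -/
abbrev E3 := EuclideanSpace ℝ (Fin 3)

/-- The closed unit cube Q = [0,1]³. -/
def Qcube : Set E3 := {x | ∀ i, x i ∈ Set.Icc (0 : ℝ) 1}

/-- The quantization energy E(Y) = ∫_Q dist(x,Y)² dx. -/
def quantE (Y : Finset E3) : ℝ := ∫ x in Qcube, (Metric.infDist x (↑Y : Set E3)) ^ 2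

/-- The Voronoi cell of a generator y ∈ Y, relative to Q. -/
def vorCell (Y : Finset E3) (y : E3) : Set E3 :=
  {x ∈ Qcube | ∀ z ∈ Y, dist x y ≤ dist x z}

/-- Y is a minimizer of the quantization energy among n-point subsets of Q. -/
def IsMinimizer (n : ℕ) (Y : Finset E3) : Prop :=
  (↑Y : Set E3) ⊆ Qcube ∧ Y.card = n ∧
    ∀ Z : Finset E3, (↑Z : Set E3) ⊆ Qcube → Z.card = n → quantE Y ≤ quantE Z

/-- ω₃ = 4π/3, the volume of the unit ball in ℝ³. -/
def omega3 : ℝ := 4 * Real.pi / 3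

/-- Γ₁ = (2/5)^{2/3} / 40. -/
def Gamma1 : ℝ := ((2 / 5 : ℝ) ^ ((2 : ℝ) / 3)) / 40

/-- Γ₃ = ω₃^{-1/5} Γ₁^{1/5}. -/
def Gamma3 : ℝ := omega3 ^ (-(1 : ℝ) / 5) * Gamma1 ^ ((1 : ℝ) / 5)

/-- Γ₅ = (1/4)(√(1 + 2⁴·3³/(5²·10³)) − 1) Γ₃. -/
def Gamma5 : ℝ :=
  (1 / 4) * (Real.sqrt (1 + (2 ^ 4 * 3 ^ 3 : ℝ) / (5 ^ 2 * 10 ^ 3)) - 1) * Gamma3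

/-- Γ₄, the diameter upper-bound constant. -/
def Gamma4 : ℝ :=
  (2 * (12 : ℝ) ^ ((1 : ℝ) / 4) * (16 : ℝ) ^ ((1 : ℝ) / 3) /
      (Real.pi ^ ((1 : ℝ) / 4) * omega3 ^ ((1 : ℝ) / 12))) *
    (Real.sqrt (1 + (2 ^ 4 * 3 ^ 3 : ℝ) / (5 ^ 2 * 10 ^ 3)) - 1) ^ (-(1 : ℝ) / 2) *
    ((5 ^ 2 * 10 ^ 3 : ℝ) / (2 ^ 2 * 3 ^ 3)) ^ ((1 : ℝ) / 4)


open Metric Set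

set_option maxHeartbeats 1000000

local instance : DecidableEq E3 := Classical.decEq _

lemma qcube_eq : Qcube = (⇑(EuclideanSpace.equiv (Fin 3) ℝ)) ⁻¹' (Set.univ.pi fun _ => Set.Icc (0:ℝ) 1) := by
  ext x; simp only [Qcube, Set.mem_preimage, Set.mem_univ_pi, mem_setOf_eq]; rfl

lemma qcube_compact : IsCompact Qcube := by
  rw [qcube_eq]
  exact (EuclideanSpace.equiv (Fin 3) ℝ).toHomeomorph.isCompact_preimage.2
    (isCompact_univ_pi fun _ => isCompact_Icc)

lemma qcube_closed : IsClosed Qcube := qcube_compact.isClosed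

lemma qcube_convex : Convex ℝ Qcube := by
  rw [qcube_eq]
  exact ((convex_pi fun i _ => convex_Icc 0 1).linear_preimage (EuclideanSpace.equiv (Fin 3) ℝ).toLinearMap)

lemma qcube_meas : MeasurableSet Qcube := qcube_closed.measurableSet

noncomputable def midp : E3 := (EuclideanSpace.equiv (Fin 3) ℝ).symm (fun _ => (1:ℝ)/2)

lemma midp_interior : midp ∈ interior Qcube := by
  have hopen : IsOpen {x : E3 | ∀ i, x i ∈ Set.Ioo (0:ℝ) 1} := by
    have : {x : E3 | ∀ i, x i ∈ Set.Ioo (0:ℝ) 1} =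
        ⋂ i, (⇑(EuclideanSpace.proj (𝕜 := ℝ) i)) ⁻¹' (Set.Ioo (0:ℝ) 1) := by
      ext x; simp [EuclideanSpace.proj]
    rw [this]
    exact isOpen_iInter_of_finite fun i => (isOpen_Ioo).preimage (EuclideanSpace.proj i).continuous
  have hsub : {x : E3 | ∀ i, x i ∈ Set.Ioo (0:ℝ) 1} ⊆ Qcube :=
    fun x hx i => ⟨(hx i).1.le, (hx i).2.le⟩
  apply interior_maximal hsub hopen
  intro i; constructor <;> norm_num [midp]

lemma qcube_ball_pos {p : E3} (hp : p ∈ Qcube) {r : ℝ} (hr : 0 < r) :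
    0 < volume (Qcube ∩ ball p r) := by
  -- find an interior point of Qcube inside ball p r
  obtain ⟨t, ht0, ht1, hmem⟩ : ∃ t : ℝ, 0 < t ∧ t ≤ 1 ∧
      (1 - t) • p + t • midp ∈ interior Qcube ∩ ball p r := by
    have hc : ∀ t : ℝ, 0 < t → t ≤ 1 → (1 - t) • p + t • midp ∈ interior Qcube := by
      intro t ht0 ht1
      simpa using qcube_convex.combo_self_interior_mem_interior hp midp_interior
        (by linarith) ht0 (by ring)
    set t : ℝ := min 1 (r / (dist p midp + 1)) with htdef
    have hd : 0 ≤ dist p midp := dist_nonneg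
    have ht0 : 0 < t := lt_min one_pos (by positivity)
    have ht1 : t ≤ 1 := min_le_left _ _
    refine ⟨t, ht0, ht1, hc t ht0 ht1, ?_⟩
    rw [mem_ball]
    have : (1 - t) • p + t • midp - p = t • (midp - p) := by
      module
    rw [dist_eq_norm, this, norm_smul]
    have h2 : t ≤ r / (dist p midp + 1) := min_le_right _ _
    have : ‖midp - p‖ = dist p midp := by rw [norm_sub_rev, ← dist_eq_norm]
    rw [this, Real.norm_of_nonneg ht0.le]
    calc t * dist p midp < t * (dist p midp + 1) := by
          exact mul_lt_mul_of_pos_left (by linarith) ht0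
      _ ≤ (r / (dist p midp + 1)) * (dist p midp + 1) := by
          apply mul_le_mul_of_nonneg_right h2 (by linarith)
      _ = r := by field_simp
  have hopen : IsOpen (interior Qcube ∩ ball p r) := isOpen_interior.inter isOpen_ball
  have hpos := hopen.measure_pos volume ⟨_, hmem⟩
  refine lt_of_lt_of_le hpos (measure_mono ?_)
  exact inter_subset_inter_left _ interior_subset

lemma qcube_infinite : Qcube.Infinite := by
  have : Set.InjOn (fun t : ℝ => (EuclideanSpace.equiv (Fin 3) ℝ).symm (fun _ => t)) (Set.Icc 0 1) := by
    intro a _ b _ h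
    have := congrArg (fun v => (EuclideanSpace.equiv (Fin 3) ℝ) v 0) h
    simpa using this
  have h2 : (fun t : ℝ => (EuclideanSpace.equiv (Fin 3) ℝ).symm (fun _ => t)) '' (Set.Icc 0 1) ⊆ Qcube := by
    rintro _ ⟨t, ht, rfl⟩ i
    simpa using ht
  exact ((Set.Icc_infinite one_pos).image this).mono h2

lemma integrableOn_sq_infDist (S : Set E3) {A : Set E3} (hA : MeasurableSet A) (hAQ : A ⊆ Qcube) :
    IntegrableOn (fun x => Metric.infDist x S ^ 2) A := by
  apply IntegrableOn.mono_set ?_ hAQ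
  apply ContinuousOn.integrableOn_compact qcube_compact
  exact ((Metric.continuous_infDist_pt S).pow 2).continuousOn

lemma vorCell_closed (Y : Finset E3) (y : E3) : IsClosed (vorCell Y y) := by
  have : vorCell Y y = Qcube ∩ ⋂ z ∈ Y, {x : E3 | dist x y ≤ dist x z} := by
    ext x; simp [vorCell]
  rw [this]
  refine qcube_compact.isClosed.inter (isClosed_biInter fun z _ => ?_)
  exact isClosed_le (continuous_id.dist continuous_const) (continuous_id.dist continuous_const)

lemma vorCell_meas (Y : Finset E3) (y : E3) : MeasurableSet (vorCell Y y) :=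
  (vorCell_closed Y y).measurableSet

lemma infDist_eq_on_cell {Y : Finset E3} {y : E3} (hy : y ∈ Y) {x : E3}
    (hx : x ∈ vorCell Y y) : Metric.infDist x (↑Y : Set E3) = dist x y := by
  refine le_antisymm (Metric.infDist_le_dist_of_mem (by exact_mod_cast hy)) ?_
  rw [Metric.infDist_eq_iInf]
  haveI : Nonempty (↑Y : Set E3) := ⟨⟨y, by exact_mod_cast hy⟩⟩
  exact le_ciInf fun z => hx.2 z z.2

lemma infDist_off_cell {Y : Finset E3} {y : E3} (hy : y ∈ Y) {x : E3}
    (hx : x ∈ Qcube \ vorCell Y y) :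
    Metric.infDist x (↑(Y.erase y) : Set E3) = Metric.infDist x (↑Y : Set E3) := by
  obtain ⟨hxQ, hxA⟩ := hx
  have hz : ∃ z ∈ Y, dist x z < dist x y := by
    by_contra h
    push_neg at h
    exact hxA ⟨hxQ, fun z hzY => h z hzY⟩
  obtain ⟨z, hzY, hzlt⟩ := hz
  have hfin : (↑Y : Set E3).Finite := Y.finite_toSet
  obtain ⟨w, hwY, hw⟩ := hfin.isCompact.exists_infDist_eq_dist ⟨y, by exact_mod_cast hy⟩ x
  have hwne : w ≠ y := by
    rintro rfl
    have : Metric.infDist x (↑Y : Set E3) ≤ dist x z := Metric.infDist_le_dist_of_mem hzY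
    rw [hw] at this; linarith
  have hwe : w ∈ (↑(Y.erase y) : Set E3) := by
    simp only [Finset.coe_erase, Set.mem_diff, Set.mem_singleton_iff]
    exact ⟨hwY, hwne⟩
  refine le_antisymm (le_trans (Metric.infDist_le_dist_of_mem hwe) (le_of_eq hw.symm)) ?_
  apply Metric.infDist_le_infDist_of_subset ?_ ?_
  · exact_mod_cast Finset.erase_subset y Y
  · exact ⟨w, hwe⟩

lemma quantE_anti {W Z : Finset E3} (hWZ : W ⊆ Z) (hW : W.Nonempty) :
    quantE Z ≤ quantE W := by
  apply setIntegral_mono_on (integrableOn_sq_infDist _ qcube_meas subset_rfl)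
    (integrableOn_sq_infDist _ qcube_meas subset_rfl) qcube_meas
  intro x _
  have h1 : Metric.infDist x (↑Z : Set E3) ≤ Metric.infDist x (↑W : Set E3) :=
    Metric.infDist_le_infDist_of_subset (by exact_mod_cast hWZ) (by exact_mod_cast hW)
  exact pow_le_pow_left₀ Metric.infDist_nonneg h1 2

lemma pad_finset (n : ℕ) (W : Finset E3) (hWQ : (↑W : Set E3) ⊆ Qcube) (h : W.card ≤ n) :
    ∃ W' : Finset E3, W ⊆ W' ∧ (↑W' : Set E3) ⊆ Qcube ∧ W'.card = n := by
  induction n with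
  | zero => exact ⟨W, subset_rfl, hWQ, Nat.le_zero.1 h⟩
  | succ m ih =>
    rcases Nat.lt_or_ge W.card (m+1) with hlt | hge
    · obtain ⟨W', h1, h2, h3⟩ := ih (Nat.lt_succ_iff.1 hlt)
      obtain ⟨p, hpQ, hpW⟩ : ∃ p, p ∈ Qcube ∧ p ∉ W' := by
        have := (qcube_infinite.diff (W'.finite_toSet)).nonempty
        obtain ⟨p, hp⟩ := this
        exact ⟨p, hp.1, by simpa using hp.2⟩
      refine ⟨insert p W', h1.trans (Finset.subset_insert _ _), ?_, ?_⟩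
      · intro x hx
        simp only [Finset.coe_insert, Set.mem_insert_iff] at hx
        rcases hx with rfl | hx
        · exact hpQ
        · exact h2 hx
      · rw [Finset.card_insert_of_notMem hpW, h3]
    · exact ⟨W, subset_rfl, hWQ, le_antisymm h hge⟩

lemma minimizer_le_swap {n : ℕ} {Y : Finset E3} (hY : IsMinimizer n Y) {y : E3}
    (hyY : y ∈ Y) {b : E3} (hb : b ∈ Qcube) :
    quantE Y ≤ quantE (insert b (Y.erase y)) := by
  obtain ⟨hYQ, hcard, hmin⟩ := hY
  set Z := insert b (Y.erase y) with hZ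
  have hZQ : (↑Z : Set E3) ⊆ Qcube := by
    intro x hx
    simp only [hZ, Finset.coe_insert, Set.mem_insert_iff, Finset.coe_erase, Set.mem_diff] at hx
    rcases hx with rfl | ⟨hx, _⟩
    · exact hb
    · exact hYQ hx
  have h1n : 1 ≤ n := by
    rw [← hcard]; exact Finset.card_pos.2 ⟨y, hyY⟩
  have hZcard : Z.card ≤ n := by
    calc Z.card ≤ (Y.erase y).card + 1 := Finset.card_insert_le _ _
      _ ≤ n := by rw [Finset.card_erase_of_mem hyY, hcard]; omega

  obtain ⟨W', h1, h2, h3⟩ := pad_finset n Z hZQ hZcard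
  calc quantE Y ≤ quantE W' := hmin W' h2 h3
    _ ≤ quantE Z := quantE_anti h1 ⟨b, Finset.mem_insert_self _ _⟩

lemma measure_cell_pos {n : ℕ} {Y : Finset E3} (hY : IsMinimizer n Y) {y : E3}
    (hyY : y ∈ Y) : 0 < volume (vorCell Y y) := by
  by_contra h
  push_neg at h
  have hA0 : volume (vorCell Y y) = 0 := le_antisymm (by simpa using h) (zero_le)
  set A := vorCell Y y with hA
  rcases Finset.eq_empty_or_nonempty (Y.erase y) with herase | herase
  · -- then A = Qcube, which has positive volume
    have : Qcube ⊆ A := by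
      intro x hx
      refine ⟨hx, fun z hz => ?_⟩
      have : z = y := by
        by_contra hne
        exact (Finset.notMem_empty z) (herase ▸ Finset.mem_erase.2 ⟨hne, hz⟩)
      rw [this]
    have hQpos : 0 < volume Qcube := by
      refine lt_of_lt_of_le (isOpen_interior.measure_pos volume ⟨midp, midp_interior⟩)
        (measure_mono interior_subset)
    exact absurd (le_antisymm (hA0 ▸ measure_mono this) (zero_le)) (by
      rw [← hA0] at hQpos ⊢
      exact fun hc => (lt_irrefl _ (hc ▸ lt_of_lt_of_le hQpos (measure_mono this))).elim)
  · obtain ⟨p, hpQ, hpE⟩ : ∃ p, p ∈ Qcube ∧ p ∉ (↑(Y.erase y) : Set E3) := by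
      obtain ⟨p, hp⟩ := (qcube_infinite.diff (Y.erase y).finite_toSet).nonempty
      exact ⟨p, hp.1, hp.2⟩
    have hEne : (↑(Y.erase y) : Set E3).Nonempty := by
      obtain ⟨z, hz⟩ := herase; exact ⟨z, by exact_mod_cast hz⟩
    have hEclosed : IsClosed (↑(Y.erase y) : Set E3) := (Y.erase y).finite_toSet.isClosed
    set δ := Metric.infDist p (↑(Y.erase y) : Set E3) with hδ
    have hδpos : 0 < δ := (hEclosed.notMem_iff_infDist_pos hEne).1 hpE
    set Z := insert p (Y.erase y) with hZdef
    set f := fun x : E3 => Metric.infDist x (↑Z : Set E3) ^ 2 with hf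
    set g := fun x : E3 => Metric.infDist x (↑Y : Set E3) ^ 2 with hg
    have hfint : IntegrableOn f Qcube := integrableOn_sq_infDist _ qcube_meas subset_rfl
    have hgint : IntegrableOn g Qcube := integrableOn_sq_infDist _ qcube_meas subset_rfl
    have haeA : ∀ᵐ x : E3, x ∉ A := measure_eq_zero_iff_ae_notMem.mp hA0
    -- pointwise bounds
    have hEB : ∀ x ∈ Qcube \ A, f x ≤ g x := by
      intro x hx
      have h1 : Metric.infDist x (↑Z : Set E3) ≤ Metric.infDist x (↑(Y.erase y) : Set E3) := by
        apply Metric.infDist_le_infDist_of_subset ?_ hEne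
        exact_mod_cast Finset.subset_insert _ _
      rw [infDist_off_cell hyY hx] at h1
      exact pow_le_pow_left₀ Metric.infDist_nonneg h1 2
    set B := Qcube ∩ ball p (δ/3) with hB
    have hBmeas : MeasurableSet B := qcube_meas.inter measurableSet_ball
    have hBpos : 0 < volume B := qcube_ball_pos hpQ (by linarith)
    have hBfin : volume B ≠ ⊤ := by
      exact ne_of_lt (lt_of_le_of_lt (measure_mono inter_subset_left) qcube_compact.measure_lt_top)
    have hgap : ∀ x ∈ B \ A, δ^2/3 ≤ g x - f x := by
      intro x ⟨⟨hxQ, hxball⟩, hxA⟩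
      have h1 : Metric.infDist x (↑Z : Set E3) ≤ δ/3 := by
        have hd : dist x p < δ/3 := by rw [dist_comm]; exact mem_ball'.1 hxball
        have hp : p ∈ (↑Z : Set E3) := by exact_mod_cast Finset.mem_insert_self _ _
        exact le_trans (Metric.infDist_le_dist_of_mem hp) hd.le
      have h2 : 2*δ/3 ≤ Metric.infDist x (↑(Y.erase y) : Set E3) := by
        have := Metric.infDist_le_infDist_add_dist (x := p) (y := x)
          (s := (↑(Y.erase y) : Set E3))
        have hd : dist p x < δ/3 := mem_ball'.1 hxball
        rw [← hδ] at this
        linarith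
      have h3 : Metric.infDist x (↑(Y.erase y) : Set E3) = Metric.infDist x (↑Y : Set E3) :=
        infDist_off_cell hyY ⟨hxQ, hxA⟩
      have hf2 : f x ≤ (δ/3)^2 := by
        apply pow_le_pow_left₀ Metric.infDist_nonneg h1
      have hg2 : (2*δ/3)^2 ≤ g x := by
        rw [hg]
        simp only
        rw [← h3]
        apply pow_le_pow_left₀ (by linarith) h2
      nlinarith
    -- integral comparison
    have key : quantE Z < quantE Y := by
      have hsub : quantE Y - quantE Z = ∫ x in Qcube, (g x - f x) := by
        rw [quantE, quantE, ← integral_sub hgint hfint]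
      have hge : (δ^2/3) * (volume B).toReal ≤ ∫ x in Qcube, (g x - f x) := by
        have hBQ : B ⊆ Qcube := inter_subset_left
        have hnonneg : (0 : E3 → ℝ) ≤ᵐ[volume.restrict Qcube] (fun x => g x - f x) := by
          refine (ae_restrict_iff' qcube_meas).2 ?_
          filter_upwards [haeA] with x hxA hxQ
          simpa [sub_nonneg] using hEB x ⟨hxQ, hxA⟩
        have step1 : ∫ x in B, (g x - f x) ≤ ∫ x in Qcube, (g x - f x) := by
          exact setIntegral_mono_set (hgint.sub hfint) hnonneg
            (HasSubset.Subset.eventuallyLE hBQ)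
        have step2 : (δ^2/3) * (volume B).toReal ≤ ∫ x in B, (g x - f x) := by
          have hIB : IntegrableOn (fun x => g x - f x) B volume :=
            MeasureTheory.IntegrableOn.mono_set (hgint.sub hfint) hBQ
          have hle : (fun _ : E3 => (δ^2/3 : ℝ)) ≤ᵐ[volume.restrict B] (fun x => g x - f x) := by
            refine (ae_restrict_iff' hBmeas).2 ?_
            filter_upwards [haeA] with x hxA hxB
            exact hgap x ⟨hxB, hxA⟩
          have := setIntegral_mono_ae_restrict (integrableOn_const hBfin) hIB hle
          rw [setIntegral_const, smul_eq_mul, measureReal_def] at this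
          linarith [this]
        linarith
      have hpos : 0 < (δ^2/3) * (volume B).toReal := by
        apply mul_pos (by positivity)
        exact ENNReal.toReal_pos (ne_of_gt hBpos) hBfin
      linarith [hsub ▸ (lt_of_lt_of_le hpos hge)]
    exact absurd (minimizer_le_swap hY hyY hpQ) (not_le.2 key)

lemma hyperplane_null (i : Fin 3) (c : ℝ) : volume {x : E3 | x i = c} = 0 := by
  set s : AffineSubspace ℝ E3 :=
    AffineSubspace.comap ((EuclideanSpace.proj (𝕜 := ℝ) i).toLinearMap.toAffineMap)
      (AffineSubspace.mk' c (⊥ : Submodule ℝ ℝ)) with hs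
  have hcarrier : {x : E3 | x i = c} = (s : Set E3) := by
    ext x
    simp only [hs, AffineSubspace.coe_comap, Set.mem_preimage, mem_setOf_eq,
      SetLike.mem_coe, AffineSubspace.mem_mk', Submodule.mem_bot, vsub_eq_sub,
      sub_eq_zero]
    rfl
  have hne : s ≠ ⊤ := by
    intro h
    have : ((EuclideanSpace.equiv (Fin 3) ℝ).symm (fun _ => c + 1) : E3) ∈ s := by
      rw [h]; trivial
    rw [← SetLike.mem_coe, ← hcarrier] at this
    simp at this
  rw [hcarrier]
  exact MeasureTheory.Measure.addHaar_affineSubspace volume s hne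

lemma dist_sq_sum (x z : E3) : dist x z ^ 2 = ∑ i, (x i - z i)^2 := by
  rw [EuclideanSpace.dist_eq, Real.sq_sqrt (by positivity)]
  congr 1; ext i; rw [Real.dist_eq, sq_abs]

lemma integrableOn_of_cont {A : Set E3} (hAQ : A ⊆ Qcube) {f : E3 → ℝ} (hf : Continuous f) :
    IntegrableOn f A := (hf.continuousOn.integrableOn_compact qcube_compact).mono_set hAQ

lemma cont_coord (i : Fin 3) : Continuous fun x : E3 => x i :=
  (EuclideanSpace.proj (𝕜 := ℝ) i).continuous

lemma centroid_exists {A : Set E3} (hAmeas : MeasurableSet A) (hAQ : A ⊆ Qcube)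
    (hA0 : volume A ≠ 0) (hAfin : volume A ≠ ⊤) :
    ∃ b : E3, b ∈ Qcube ∧ (∀ i, b i ∈ Set.Ioo (0:ℝ) 1) ∧
      ∀ z : E3, ∫ x in A, (dist x z ^ 2 - dist x b ^ 2) =
        (volume A).toReal * dist z b ^ 2 := by
  set m := (volume A).toReal with hmdef
  have hm : 0 < m := ENNReal.toReal_pos hA0 hAfin
  set b : E3 := (EuclideanSpace.equiv (Fin 3) ℝ).symm (fun i => (∫ x in A, x i) / m) with hbdef
  have hbi : ∀ i, b i = (∫ x in A, x i) / m := fun i => rfl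
  have hint : ∀ i, IntegrableOn (fun x : E3 => x i) A :=
    fun i => integrableOn_of_cont hAQ (cont_coord i)
  have hconst : ∀ c : ℝ, IntegrableOn (fun _ : E3 => c) A :=
    fun c => integrableOn_const hAfin
  have hIm : ∀ i, ∫ x in A, x i = m * b i := by
    intro i; rw [hbi]; field_simp
  -- positivity of coordinate integrals
  have hstrict : ∀ i (c : ℝ) (hc : c = 0 ∨ c = 1),
      0 < volume (A ∩ {x : E3 | x i ≠ c}) := by
    intro i c _
    have h1 : volume A ≤ volume (A ∩ {x : E3 | x i ≠ c}) + volume (A \ {x : E3 | x i ≠ c}) :=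
      measure_le_inter_add_diff volume A _
    have h2 : volume (A \ {x : E3 | x i ≠ c}) = 0 := by
      apply measure_mono_null ?_ (hyperplane_null i c)
      intro x hx
      have := hx.2
      simpa using this
    rw [h2, add_zero] at h1
    exact lt_of_lt_of_le (pos_iff_ne_zero.2 hA0) h1
  have hlow : ∀ i, 0 < ∫ x in A, x i := by
    intro i
    rw [setIntegral_pos_iff_support_of_nonneg_ae]
    · apply lt_of_lt_of_le (hstrict i 0 (Or.inl rfl))
      apply measure_mono
      rintro x ⟨hxA, hxne⟩
      exact ⟨hxne, hxA⟩
    · refine (ae_restrict_iff' hAmeas).2 (Filter.Eventually.of_forall fun x hx => (hAQ hx i).1)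
    · exact hint i
  have hhigh : ∀ i, (∫ x in A, x i) < m := by
    intro i
    have hpos : 0 < ∫ x in A, (1 - x i) := by
      rw [setIntegral_pos_iff_support_of_nonneg_ae]
      · apply lt_of_lt_of_le (hstrict i 1 (Or.inr rfl))
        apply measure_mono
        rintro x ⟨hxA, hxne⟩
        refine ⟨?_, hxA⟩
        simp only [Function.mem_support]
        intro hc
        exact hxne (by linarith)
      · refine (ae_restrict_iff' hAmeas).2 (Filter.Eventually.of_forall fun x hx => by
          have := (hAQ hx i).2; simp only [Pi.zero_apply]; linarith)
      · exact (hconst 1).sub (hint i)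
    have : ∫ x in A, (1 - x i) = m - ∫ x in A, x i := by
      rw [integral_sub (hconst 1) (hint i), setIntegral_const, smul_eq_mul, mul_one, measureReal_def]
    linarith [this ▸ hpos]
  have hIoo : ∀ i, b i ∈ Set.Ioo (0:ℝ) 1 := by
    intro i
    rw [hbi]
    constructor
    · exact div_pos (hlow i) hm
    · rw [div_lt_one hm]; exact hhigh i
  refine ⟨b, fun i => ⟨(hIoo i).1.le, (hIoo i).2.le⟩, hIoo, ?_⟩
  intro z
  -- per coordinate identity
  have key : ∀ i (c : ℝ), ∫ x in A, ((x i - c)^2 - (x i - b i)^2) = m * (b i - c)^2 := by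
    intro i c
    have heq : (fun x : E3 => (x i - c)^2 - (x i - b i)^2) =
        (fun x : E3 => (2*(b i - c)) * x i + (c^2 - (b i)^2)) := by
      funext x; ring
    rw [heq, integral_add ((hint i).const_mul _) (hconst _), integral_const_mul,
      setIntegral_const, smul_eq_mul, measureReal_def, ← hmdef, hIm]
    ring
  have hsum : (fun x : E3 => dist x z ^ 2 - dist x b ^ 2) =
      (fun x : E3 => ∑ i, ((x i - z i)^2 - (x i - b i)^2)) := by
    funext x
    rw [dist_sq_sum x z, dist_sq_sum x b, ← Finset.sum_sub_distrib]
  rw [hsum, integral_finset_sum]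
  · have : ∀ i ∈ (Finset.univ : Finset (Fin 3)),
        ∫ x in A, ((x i - z i)^2 - (x i - b i)^2) = m * (b i - z i)^2 :=
      fun i _ => key i (z i)
    rw [Finset.sum_congr rfl this, ← Finset.mul_sum, dist_sq_sum]
    congr 1
    exact Finset.sum_congr rfl fun i _ => by ring
  · intro i _
    apply integrableOn_of_cont hAQ
    exact (((cont_coord i).sub continuous_const).pow 2).sub
      (((cont_coord i).sub continuous_const).pow 2)

lemma infDist_insert_le_off_cell {Y : Finset E3} {y b x : E3} (hyY : y ∈ Y)
    (hx : x ∈ Qcube \ vorCell Y y) :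
    Metric.infDist x (↑(insert b (Y.erase y)) : Set E3) ≤ Metric.infDist x (↑Y : Set E3) := by
  obtain ⟨hxQ, hxA⟩ := hx
  have hz : ∃ z ∈ Y, dist x z < dist x y := by
    by_contra h
    push_neg at h
    exact hxA ⟨hxQ, fun z hzY => h z hzY⟩
  obtain ⟨z, hzY, hzlt⟩ := hz
  have hzne : z ≠ y := by
    intro h; rw [h] at hzlt; exact lt_irrefl _ hzlt
  have hEne : (↑(Y.erase y) : Set E3).Nonempty :=
    ⟨z, by exact_mod_cast Finset.mem_erase.2 ⟨hzne, hzY⟩⟩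
  have h1 : Metric.infDist x (↑(insert b (Y.erase y)) : Set E3) ≤
      Metric.infDist x (↑(Y.erase y) : Set E3) := by
    apply Metric.infDist_le_infDist_of_subset ?_ hEne
    exact_mod_cast Finset.subset_insert _ _
  rw [infDist_off_cell hyY ⟨hxQ, hxA⟩] at h1
  exact h1

lemma coord_open {n : ℕ} {Y : Finset E3} (hY : IsMinimizer n Y) {y : E3}
    (hyY : y ∈ Y) : ∀ i, y i ∈ Set.Ioo (0:ℝ) 1 := by
  set A := vorCell Y y with hAdef
  have hAmeas := vorCell_meas Y y
  have hAQ : A ⊆ Qcube := fun x hx => hx.1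
  have hpos := measure_cell_pos hY hyY
  have hfin : volume A ≠ ⊤ :=
    ne_of_lt (lt_of_le_of_lt (measure_mono hAQ) qcube_compact.measure_lt_top)
  obtain ⟨b, hbQ, hbIoo, hident⟩ := centroid_exists hAmeas hAQ (ne_of_gt hpos) hfin
  by_contra hcon
  push_neg at hcon
  obtain ⟨i, hi⟩ := hcon
  have hyQ : y ∈ Qcube := hY.1 (by exact_mod_cast hyY)
  have hbneq : b ≠ y := by
    intro h
    have h1 := hbIoo i
    rw [h] at h1
    exact hi h1
  have hdistpos : 0 < dist y b := dist_pos.2 (Ne.symm hbneq)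
  set Z := insert b (Y.erase y) with hZdef
  set f := fun x : E3 => Metric.infDist x (↑Z : Set E3) ^ 2 with hf
  set g := fun x : E3 => Metric.infDist x (↑Y : Set E3) ^ 2 with hg
  have hfint : IntegrableOn f Qcube := integrableOn_sq_infDist _ qcube_meas subset_rfl
  have hgint : IntegrableOn g Qcube := integrableOn_sq_infDist _ qcube_meas subset_rfl
  have hsplit : (∫ x in Qcube ∩ A, (g x - f x)) + (∫ x in Qcube \ A, (g x - f x)) =
      ∫ x in Qcube, (g x - f x) :=
    integral_inter_add_diff hAmeas (hgint.sub hfint)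
  have hQA : Qcube ∩ A = A := Set.inter_eq_right.2 hAQ
  have hbound1 : (volume A).toReal * dist y b ^ 2 ≤ ∫ x in A, (g x - f x) := by
    rw [← hident y]
    apply setIntegral_mono_on
    · apply integrableOn_of_cont hAQ
      exact ((continuous_id.dist continuous_const).pow 2).sub
        ((continuous_id.dist continuous_const).pow 2)
    · exact MeasureTheory.IntegrableOn.mono_set (hgint.sub hfint) hAQ
    · exact hAmeas
    · intro x hx
      have hgx : g x = dist x y ^ 2 := by
        rw [hg]; simp only; rw [infDist_eq_on_cell hyY hx]
      have hfx : f x ≤ dist x b ^ 2 := by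
        apply pow_le_pow_left₀ Metric.infDist_nonneg
        exact Metric.infDist_le_dist_of_mem (by exact_mod_cast Finset.mem_insert_self _ _)
      rw [hgx]
      linarith
  have hbound2 : 0 ≤ ∫ x in Qcube \ A, (g x - f x) := by
    apply setIntegral_nonneg (qcube_meas.diff hAmeas)
    intro x hx
    have := infDist_insert_le_off_cell (b := b) hyY hx
    have h2 : f x ≤ g x := pow_le_pow_left₀ Metric.infDist_nonneg this 2
    linarith
  have hkey : quantE Z < quantE Y := by
    have hsub : quantE Y - quantE Z = ∫ x in Qcube, (g x - f x) := by
      rw [quantE, quantE, ← integral_sub hgint hfint]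
    have hmpos : 0 < (volume A).toReal * dist y b ^ 2 := by
      apply mul_pos (ENNReal.toReal_pos (ne_of_gt hpos) hfin)
      positivity
    rw [hQA] at hsplit
    have h0 : 0 < ∫ x in Qcube, (g x - f x) := by linarith
    linarith [hsub, h0]
  exact absurd (minimizer_le_swap hY hyY hbQ) (not_le.2 hkey)

lemma coord_dist_le (x z : E3) (i : Fin 3) : |x i - z i| ≤ dist x z := by
  have h2 : (x i - z i)^2 ≤ dist x z ^ 2 := by
    rw [dist_sq_sum]
    exact Finset.single_le_sum (f := fun j : Fin 3 => (x j - z j)^2) (fun j _ => sq_nonneg _) (Finset.mem_univ i)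
  calc |x i - z i| = Real.sqrt ((x i - z i)^2) := (Real.sqrt_sq_eq_abs _).symm
    _ ≤ Real.sqrt (dist x z ^ 2) := Real.sqrt_le_sqrt h2
    _ = dist x z := by rw [Real.sqrt_sq dist_nonneg]


theorem stmt_18 (n : ℕ) (hn : 1 ≤ n) (Y : Finset E3) (hY : IsMinimizer n Y)
    (y : E3) (hyY : y ∈ Y) :
    y ∈ interior (vorCell Y y) := by
  have hcoord := coord_open hY hyY
  -- a radius keeping coordinates inside (0,1)
  obtain ⟨ε, hε, hεb⟩ : ∃ ε > (0:ℝ), ∀ i, ε ≤ y i ∧ y i ≤ 1 - ε := by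
    refine ⟨Finset.univ.inf' ⟨0, Finset.mem_univ 0⟩ (fun i => min (y i) (1 - (y i))), ?_, ?_⟩
    · show (0:ℝ) < _
      refine (Finset.lt_inf'_iff _).2 fun i _ => ?_
      exact lt_min (hcoord i).1 (by linarith [(hcoord i).2])
    · intro i
      have h1 := Finset.inf'_le (b := i) (fun j => min (y j) (1 - (y j))) (Finset.mem_univ i)
      constructor
      · linarith [min_le_left (y i) (1 - y i), h1]
      · linarith [min_le_right (y i) (1 - y i), h1]
  -- a radius keeping y strictly closest
  obtain ⟨r, hr, hrε, hrclose⟩ : ∃ r > (0:ℝ), r ≤ ε ∧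
      ∀ z ∈ Y, z ≠ y → ∀ x, dist x y < r → dist x y ≤ dist x z := by
    rcases Finset.eq_empty_or_nonempty (Y.erase y) with he | he
    · refine ⟨ε, hε, le_refl _, fun z hz hzne x _ => absurd ?_ hzne⟩
      by_contra h
      exact (Finset.notMem_empty z) (he ▸ Finset.mem_erase.2 ⟨h, hz⟩)
    · have hTne : (↑(Y.erase y) : Set E3).Nonempty := by
        obtain ⟨z, hz⟩ := he; exact ⟨z, by exact_mod_cast hz⟩
      have hTclosed : IsClosed (↑(Y.erase y) : Set E3) := (Y.erase y).finite_toSet.isClosed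
      have hyT : y ∉ (↑(Y.erase y) : Set E3) := by
        simp
      set δ := Metric.infDist y (↑(Y.erase y) : Set E3) with hδ
      have hδpos : 0 < δ := (hTclosed.notMem_iff_infDist_pos hTne).1 hyT
      refine ⟨min ε (δ/3), lt_min hε (by linarith), min_le_left _ _, ?_⟩
      intro z hzY hzne x hx
      have hzT : z ∈ (↑(Y.erase y) : Set E3) := by
        exact_mod_cast Finset.mem_erase.2 ⟨hzne, hzY⟩
      have hδz : δ ≤ dist y z := Metric.infDist_le_dist_of_mem hzT
      have hxy : dist x y < δ/3 := lt_of_lt_of_le hx (min_le_right _ _)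
      have htri : dist y z ≤ dist y x + dist x z := dist_triangle _ _ _
      have hdyx : dist y x = dist x y := dist_comm _ _
      linarith
  rw [mem_interior]
  refine ⟨ball y r, ?_, isOpen_ball, mem_ball_self hr⟩
  intro x hx
  rw [mem_ball] at hx
  constructor
  · intro i
    have hci := coord_dist_le x y i
    have h1 := abs_le.1 (le_trans hci hx.le)
    have h2 := hεb i
    constructor
    · linarith [h1.1, h2.1]
    · linarith [h1.2, h2.2]
  · intro z hzY
    by_cases hzne : z = y
    · rw [hzne]
    · exact hrclose z hzY hzne x hx
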